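/- Let P be a nonnegative real random variable and J a random variable with the Gamma distribution with integer shape n ≥ 1 and scale θ > 0, with P and J independent, and let β > 0. Then the series ∑_{m=n}^∞ (1/m!)·E[(P/(θβ))^m · e^{−P/(θβ)}] converges and ℙ(P ≤ β·J) = 1 − ∑_{m=n}^∞ (1/m!)·E[(P/(θβ))^m · e^{−P/(θβ)}]. -/

import Mathlib

open MeasureTheory ProbabilityTheory

/-- The density of the Gamma distribution with shape `k` and scale `θ`:
`x ↦ x^(k-1) * exp(-x/θ) / (Γ(k) * θ^k)` on `(0, ∞)`. -/
noncomputable def gammaDensity (k θ x : ℝ) : ℝ :=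
  Set.indicator (Set.Ioi 0) (fun y => y ^ (k - 1) * Real.exp (-y / θ) / (Real.Gamma k * θ ^ k)) x

/-- `J` has the Gamma distribution with shape `k` and scale `θ` under `μ`. -/
def IsGammaLaw {Ω : Type*} [MeasurableSpace Ω] (μ : Measure Ω) (J : Ω → ℝ) (k θ : ℝ) : Prop :=
  Measure.map J μ = volume.withDensity (fun x => ENNReal.ofReal (gammaDensity k θ x))


private lemma aux_hasSum_one (t : ℝ) :
    HasSum (fun m : ℕ => t ^ m / m.factorial * Real.exp (-t)) 1 := by
  have h : HasSum (fun m : ℕ => t ^ m / m.factorial) (Real.exp t) := by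
    rw [Real.exp_eq_exp_ℝ]; exact NormedSpace.expSeries_div_hasSum_exp t
  have h2 := h.mul_right (Real.exp (-t))
  rwa [← Real.exp_add, add_neg_cancel, Real.exp_zero] at h2

private lemma gammaDensity_eq_pow (k : ℕ) {θ x : ℝ} (hθ : 0 < θ) (hx : 0 < x) :
    gammaDensity (k + 1 : ℕ) θ x
      = x ^ k * Real.exp (-x / θ) / (k.factorial * θ ^ (k + 1)) := by
  unfold gammaDensity
  rw [Set.indicator_of_mem (by exact hx)]
  have h1 : ((k + 1 : ℕ) : ℝ) - 1 = ((k : ℕ) : ℝ) := by push_cast; ring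
  have h2 : ((k + 1 : ℕ) : ℝ) = ((k : ℕ) : ℝ) + 1 := by push_cast; ring
  rw [h1, Real.rpow_natCast]
  rw [h2, Real.Gamma_nat_eq_factorial, ← h2, Real.rpow_natCast]

private lemma gammaDensity_nonneg (k : ℕ) {θ : ℝ} (hθ : 0 < θ) (x : ℝ) :
    0 ≤ gammaDensity (k + 1 : ℕ) θ x := by
  by_cases hx : x ∈ Set.Ioi (0:ℝ)
  · rw [gammaDensity_eq_pow k hθ hx]
    have := hx.out
    apply div_nonneg (mul_nonneg (pow_nonneg this.le k) (Real.exp_pos _).le)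
    positivity
  · unfold gammaDensity; rw [Set.indicator_of_notMem hx]

private lemma gamma_tail (k : ℕ) {θ a : ℝ} (hθ : 0 < θ) (ha : 0 ≤ a) :
    IntegrableOn (gammaDensity (k + 1 : ℕ) θ) (Set.Ioi a) ∧
      ∫ x in Set.Ioi a, gammaDensity (k + 1 : ℕ) θ x
        = Real.exp (-a / θ) * ∑ m ∈ Finset.range (k + 1), (a / θ) ^ m / m.factorial := by
  set S : ℝ → ℝ := fun x => ∑ m ∈ Finset.range (k + 1), (x / θ) ^ m / m.factorial with hSdef
  set g : ℝ → ℝ := fun x => -(Real.exp (-x / θ) * S x) with hgdef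
  have hθ' : θ ≠ 0 := hθ.ne'
  have hScont : Continuous S :=
    continuous_finset_sum _ fun m _ => ((continuous_id.div_const θ).pow m).div_const _
  have hgcont : Continuous g :=
    ((Real.continuous_exp.comp (continuous_id.neg.div_const θ)).mul hScont).neg
  have hderiv : ∀ x ∈ Set.Ioi a, HasDerivAt g (gammaDensity (k + 1 : ℕ) θ x) x := by
    intro x hx
    have hx0 : 0 < x := lt_of_le_of_lt ha hx
    have hd : HasDerivAt (fun y : ℝ => y / θ) (1 / θ) x := by
      simpa using (hasDerivAt_id x).div_const θ
    have hS : HasDerivAt S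
        (∑ m ∈ Finset.range (k + 1), (m : ℝ) * (x / θ) ^ (m - 1) * (1 / θ) / m.factorial) x :=
      HasDerivAt.fun_sum fun m _ => (hd.pow m).div_const _
    have hE : HasDerivAt (fun y : ℝ => Real.exp (-y / θ)) (Real.exp (-x / θ) * (-1 / θ)) x := by
      have h2 : HasDerivAt (fun y : ℝ => -y / θ) (-1 / θ) x := by
        simpa using ((hasDerivAt_id x).neg.div_const θ)
      exact h2.exp
    have hall := (hE.mul hS).neg
    have hD : ∑ m ∈ Finset.range (k + 1), (m : ℝ) * (x / θ) ^ (m - 1) * (1 / θ) / m.factorial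
        = (∑ m ∈ Finset.range k, (x / θ) ^ m / m.factorial) / θ := by
      rw [Finset.sum_range_succ', Finset.sum_div]
      simp only [Nat.cast_zero, zero_mul, zero_div, add_zero, Nat.add_sub_cancel]
      refine Finset.sum_congr rfl fun i _ => ?_
      have h1 : ((i + 1).factorial : ℝ) = (i + 1) * i.factorial := by
        rw [Nat.factorial_succ]; push_cast; ring
      have h2 : (i.factorial : ℝ) ≠ 0 := Nat.cast_ne_zero.mpr (Nat.factorial_ne_zero i)
      have h3 : ((i : ℝ) + 1) ≠ 0 := by positivity
      rw [h1]
      push_cast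
      field_simp
    rw [hD] at hall
    convert hall using 1
    · rfl
    · rfl
    · rfl
    rw [gammaDensity_eq_pow k hθ hx0]
    rw [hSdef]
    simp only [Finset.sum_range_succ]
    have h2 : (k.factorial : ℝ) ≠ 0 := Nat.cast_ne_zero.mpr (Nat.factorial_ne_zero k)
    field_simp
    ring
    rw [inv_pow, mul_assoc (x ^ k * θ), mul_inv_cancel₀ (pow_ne_zero k hθ'), mul_one]
  have g'pos : ∀ x ∈ Set.Ioi a, 0 ≤ gammaDensity (k + 1 : ℕ) θ x :=
    fun x _ => gammaDensity_nonneg k hθ x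
  have htend : Filter.Tendsto g Filter.atTop (nhds 0) := by
    have h0 : Filter.Tendsto (fun x : ℝ => x / θ) Filter.atTop Filter.atTop :=
      Filter.tendsto_id.atTop_div_const hθ
    have hm : ∀ m : ℕ, Filter.Tendsto (fun x : ℝ => ((x / θ) ^ m * Real.exp (-(x / θ))) / m.factorial)
        Filter.atTop (nhds 0) := by
      intro m
      have := ((Real.tendsto_pow_mul_exp_neg_atTop_nhds_zero m).comp h0).div_const (m.factorial : ℝ)
      simpa using this
    have hsum : Filter.Tendsto
        (fun x : ℝ => ∑ m ∈ Finset.range (k + 1), ((x / θ) ^ m * Real.exp (-(x / θ))) / m.factorial)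
        Filter.atTop (nhds 0) := by
      have := tendsto_finset_sum (Finset.range (k + 1)) (fun m _ => hm m)
      simpa using this
    have : Filter.Tendsto (fun x : ℝ => Real.exp (-x / θ) * S x) Filter.atTop (nhds 0) := by
      refine hsum.congr fun x => ?_
      rw [hSdef, Finset.mul_sum]
      refine Finset.sum_congr rfl fun m _ => ?_
      rw [neg_div]
      ring
    simpa [hgdef] using this.neg
  constructor
  · exact integrableOn_Ioi_deriv_of_nonneg hgcont.continuousWithinAt hderiv g'pos htend
  · rw [integral_Ioi_of_hasDerivAt_of_nonneg hgcont.continuousWithinAt hderiv g'pos htend]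
    simp [hgdef, hSdef]

/-- The series `∑_{m=n}^∞ (1/m!) E[(P/(θβ))^m e^{-P/(θβ)}]`, indexed by `m = n + m'`,
converges to `1 - ℙ(P ≤ β J)`. -/
theorem stmt_5 {Ω : Type*} [MeasurableSpace Ω] (μ : Measure Ω) [IsProbabilityMeasure μ]
    (P J : Ω → ℝ) (hPm : Measurable P) (hJm : Measurable J)
    (hPnn : ∀ ω, 0 ≤ P ω)
    (n : ℕ) (hn : 1 ≤ n) (θ β : ℝ) (hθ : 0 < θ) (hβ : 0 < β)
    (hJ : IsGammaLaw μ J (n : ℝ) θ)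
    (hindep : IndepFun P J μ) :
    HasSum (fun m : ℕ =>
        (1 / (Nat.factorial (n + m)) : ℝ) *
          ∫ ω, (P ω / (θ * β)) ^ (n + m) * Real.exp (-(P ω / (θ * β))) ∂μ)
      (1 - (μ {ω | P ω ≤ β * J ω}).toReal) := by
  obtain ⟨k, rfl⟩ : ∃ k, n = k + 1 := ⟨n - 1, (Nat.succ_pred_eq_of_pos hn).symm⟩
  have hc : 0 < θ * β := mul_pos hθ hβ
  set c : ℝ := θ * β with hcdef
  set f : ℕ → Ω → ℝ := fun m ω => (P ω / c) ^ m / m.factorial * Real.exp (-(P ω / c)) with hfdef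
  have hfnn : ∀ m ω, 0 ≤ f m ω := fun m ω =>
    mul_nonneg (div_nonneg (pow_nonneg (div_nonneg (hPnn ω) hc.le) m) (by positivity))
      (Real.exp_pos _).le
  have hfle : ∀ m ω, f m ω ≤ 1 := by
    intro m ω
    have h1 : (P ω / c) ^ m / m.factorial ≤ Real.exp (P ω / c) :=
      Real.pow_div_factorial_le_exp _ (div_nonneg (hPnn ω) hc.le) m
    calc f m ω ≤ Real.exp (P ω / c) * Real.exp (-(P ω / c)) :=
          mul_le_mul_of_nonneg_right h1 (Real.exp_pos _).le
      _ = 1 := by rw [← Real.exp_add]; simp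
  have hfmeas : ∀ m, Measurable (f m) := fun m =>
    (((hPm.div_const c).pow_const m).div_const _).mul
      (Real.measurable_exp.comp (hPm.div_const c).neg)
  have hfint : ∀ m, Integrable (f m) μ := fun m =>
    Integrable.mono' (integrable_const 1) (hfmeas m).aestronglyMeasurable
      (Filter.Eventually.of_forall fun ω => by
        rw [Real.norm_of_nonneg (hfnn m ω)]; exact hfle m ω)
  have hptsum : ∀ ω, HasSum (fun m => f m ω) 1 := fun ω => aux_hasSum_one _
  have hpartial : ∀ (s : Finset ℕ) ω, ∑ m ∈ s, f m ω ≤ 1 := fun s ω =>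
    sum_le_hasSum s (fun m _ => hfnn m ω) (hptsum ω)
  have hInn : ∀ m, 0 ≤ ∫ ω, f m ω ∂μ := fun m => integral_nonneg (hfnn m ·)
  have hsummable : Summable (fun m => ∫ ω, ‖f m ω‖ ∂μ) := by
    have heq : ∀ m, ∫ ω, ‖f m ω‖ ∂μ = ∫ ω, f m ω ∂μ := fun m =>
      integral_congr_ae (Filter.Eventually.of_forall fun ω => Real.norm_of_nonneg (hfnn m ω))
    simp only [heq]
    refine summable_of_sum_range_le (c := 1) hInn fun N => ?_
    rw [← integral_finset_sum _ (fun m _ => hfint m)]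
    calc ∫ ω, ∑ m ∈ Finset.range N, f m ω ∂μ
        ≤ ∫ _ω, (1 : ℝ) ∂μ :=
          integral_mono (integrable_finset_sum _ fun m _ => hfint m) (integrable_const 1)
            (fun ω => hpartial _ ω)
      _ = 1 := by simp
  have hA : HasSum (fun m => ∫ ω, f m ω ∂μ) 1 := by
    have h := hasSum_integral_of_summable_integral_norm hfint hsummable
    have h2 : ∫ ω, (∑' m, f m ω) ∂μ = 1 := by
      rw [integral_congr_ae (Filter.Eventually.of_forall fun ω => (hptsum ω).tsum_eq)]
      simp
    rwa [h2] at h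
  -- Step B
  set G : ℝ → ℝ := fun p =>
    Real.exp (-(p / c)) * ∑ m ∈ Finset.range (k + 1), (p / c) ^ m / m.factorial with hGdef
  have hGP : ∀ ω, G (P ω) = ∑ m ∈ Finset.range (k + 1), f m ω := fun ω => by
    rw [hGdef]; simp only [Finset.mul_sum]
    exact Finset.sum_congr rfl fun m _ => by rw [hfdef]; ring
  have hS : MeasurableSet {p : ℝ × ℝ | p.1 ≤ β * p.2} :=
    measurableSet_le measurable_fst (measurable_const.mul measurable_snd)
  have hmap : Measure.map (fun ω => (P ω, J ω)) μ = (Measure.map P μ).prod (Measure.map J μ) :=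
    (indepFun_iff_map_prod_eq_prod_map_map hPm.aemeasurable hJm.aemeasurable).mp hindep
  have hνG : ∀ p : ℝ, 0 ≤ p → (Measure.map J μ) {x | p ≤ β * x} = ENNReal.ofReal (G p) := by
    intro p hp
    have hset : {x : ℝ | p ≤ β * x} = Set.Ici (p / β) := by
      ext x
      simp only [Set.mem_setOf_eq, Set.mem_Ici, div_le_iff₀ hβ, mul_comm]
    have hpb : 0 ≤ p / β := div_nonneg hp hβ.le
    rw [hJ, hset, withDensity_apply _ measurableSet_Ici,
      ← Measure.restrict_congr_set Ioi_ae_eq_Ici,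
      ← ofReal_integral_eq_lintegral_ofReal (gamma_tail k hθ hpb).1
        (Filter.Eventually.of_forall fun x => gammaDensity_nonneg k hθ x)]
    congr 1
    rw [(gamma_tail k hθ hpb).2, hGdef]
    have h1 : p / β / θ = p / c := by rw [div_div, mul_comm, hcdef]
    rw [neg_div, h1]
  have hae : ∀ᵐ p ∂(Measure.map P μ), 0 ≤ p :=
    (ae_map_iff hPm.aemeasurable (measurableSet_Ici (a := (0:ℝ)))).mpr
      (Filter.Eventually.of_forall fun ω => hPnn ω)
  have hGcont : Continuous G :=
    (Real.continuous_exp.comp (continuous_id.div_const c).neg).mul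
      (continuous_finset_sum _ fun m _ => ((continuous_id.div_const c).pow m).div_const _)
  have hB : (μ {ω | P ω ≤ β * J ω}).toReal = ∑ m ∈ Finset.range (k + 1), ∫ ω, f m ω ∂μ := by
    have h1 : μ {ω | P ω ≤ β * J ω}
        = Measure.map (fun ω => (P ω, J ω)) μ {p : ℝ × ℝ | p.1 ≤ β * p.2} :=
      (Measure.map_apply (hPm.prodMk hJm) hS).symm
    rw [h1, hmap, Measure.prod_apply hS]
    have h2 : ∫⁻ p, (Measure.map J μ) (Prod.mk p ⁻¹' {q : ℝ × ℝ | q.1 ≤ β * q.2}) ∂(Measure.map P μ)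
        = ∫⁻ p, ENNReal.ofReal (G p) ∂(Measure.map P μ) := by
      refine lintegral_congr_ae (hae.mono fun p hp => ?_)
      exact hνG p hp
    rw [h2, lintegral_map hGcont.measurable.ennreal_ofReal hPm]
    have hGint : Integrable (fun ω => G (P ω)) μ := by
      rw [show (fun ω => G (P ω)) = fun ω => ∑ m ∈ Finset.range (k + 1), f m ω from funext hGP]
      exact integrable_finset_sum _ fun m _ => hfint m
    rw [← ofReal_integral_eq_lintegral_ofReal hGint
      (Filter.Eventually.of_forall fun ω => by
        show (0:ℝ) ≤ G (P ω)
        rw [hGP ω]; exact Finset.sum_nonneg fun m _ => hfnn m ω)]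
    rw [ENNReal.toReal_ofReal (integral_nonneg fun ω => by
      rw [hGP ω]; exact Finset.sum_nonneg fun m _ => hfnn m ω)]
    rw [integral_congr_ae (Filter.Eventually.of_forall hGP),
      integral_finset_sum _ fun m _ => hfint m]
  -- conclude
  have hfinal := (hasSum_nat_add_iff' (k + 1)).mpr hA
  rw [← hB] at hfinal
  have hterms : (fun m : ℕ =>
      (1 / (Nat.factorial ((k + 1) + m)) : ℝ) *
        ∫ ω, (P ω / (θ * β)) ^ ((k + 1) + m) * Real.exp (-(P ω / (θ * β))) ∂μ)
      = fun m : ℕ => ∫ ω, f (m + (k + 1)) ω ∂μ := by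
    funext m
    rw [add_comm m (k + 1), ← integral_const_mul]
    exact integral_congr_ae (Filter.Eventually.of_forall fun ω => by rw [hfdef, ← hcdef]; ring)
  rw [hterms]
  exact hfinal
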